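/- Under the hypotheses of the main theorem (dense vector subspace V of C(Ω) with f+g having a unique equilibrium state for every g ∈ V), the set of measures that are unique equilibrium states of some function of the form f+g with g ∈ V is dense in M^τ(Ω) for the weak* topology. -/

import Mathlib

open Filter Topology

/-- Under the hypotheses of the main theorem, the set of measures that are unique equilibrium
states of some `f + g` with `g ∈ V` is dense in `M = M^τ(Ω)` for the weak* topology. -/
theorem stmt14 {Ω : Type} [TopologicalSpace Ω] [CompactSpace Ω]
    [TopologicalSpace.MetrizableSpace Ω] [Nonempty Ω]
    (M : Set (WeakDual ℝ C(Ω, ℝ))) (hne : M.Nonempty) (hcomp : IsCompact M)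
    (hconv : Convex ℝ M)
    (hprob : ∀ μ ∈ M, μ (1 : C(Ω, ℝ)) = 1 ∧ ∀ g : C(Ω, ℝ), (∀ ω, 0 ≤ g ω) → 0 ≤ μ g)
    (h : WeakDual ℝ C(Ω, ℝ) → ℝ)
    (hbdd : ∃ C : ℝ, ∀ μ ∈ M, |h μ| ≤ C)
    (haff : ∀ μ ∈ M, ∀ ν ∈ M, ∀ a b : ℝ, 0 ≤ a → 0 ≤ b → a + b = 1 →
      h (a • μ + b • ν) = a * h μ + b * h ν)
    (husc : UpperSemicontinuousOn h M)
    (P : C(Ω, ℝ) → ℝ)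
    (hP : ∀ g : C(Ω, ℝ), P g = sSup ((fun μ : WeakDual ℝ C(Ω, ℝ) => μ g + h μ) '' M))
    (f : C(Ω, ℝ))
    (V : Submodule ℝ C(Ω, ℝ)) (hV : Dense (V : Set C(Ω, ℝ)))
    (huniq : ∀ g ∈ V, ∃! μ : WeakDual ℝ C(Ω, ℝ),
      μ ∈ M ∧ μ (f + g) + h μ = P (f + g)) :
    M ⊆ closure {ν : WeakDual ℝ C(Ω, ℝ) | ∃ g ∈ V, ν ∈ M ∧
      ν (f + g) + h ν = P (f + g) ∧
      ∀ ν' ∈ M, ν' (f + g) + h ν' = P (f + g) → ν' = ν} := by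
  classical
  obtain ⟨C, hC⟩ := hbdd
  -- every element of M is a positive normalized functional, hence bounded by the sup norm
  have normbd : ∀ ν ∈ M, ∀ k : C(Ω, ℝ), |ν k| ≤ ‖k‖ := by
    intro ν hν k
    obtain ⟨h1, hpos⟩ := hprob ν hν
    have e1 : (0:ℝ) ≤ ν (‖k‖ • (1 : C(Ω, ℝ)) - k) := by
      refine hpos _ fun ω => ?_
      simp only [ContinuousMap.sub_apply, ContinuousMap.smul_apply, ContinuousMap.one_apply,
        smul_eq_mul, mul_one]
      have h2 := k.norm_coe_le_norm ω
      rw [Real.norm_eq_abs] at h2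
      have h3 := le_abs_self (k ω)
      linarith
    have e2 : (0:ℝ) ≤ ν (‖k‖ • (1 : C(Ω, ℝ)) + k) := by
      refine hpos _ fun ω => ?_
      simp only [ContinuousMap.add_apply, ContinuousMap.smul_apply, ContinuousMap.one_apply,
        smul_eq_mul, mul_one]
      have h2 := k.norm_coe_le_norm ω
      rw [Real.norm_eq_abs] at h2
      have h3 := neg_abs_le (k ω)
      linarith
    rw [map_sub, map_smul, h1, smul_eq_mul, mul_one] at e1
    rw [map_add, map_smul, h1, smul_eq_mul, mul_one] at e2
    exact abs_le.2 ⟨by linarith, by linarith⟩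
  have hPle : ∀ (k : C(Ω, ℝ)), ∀ ν ∈ M, ν k + h ν ≤ P k := by
    intro k ν hν
    rw [hP k]
    refine le_csSup ⟨‖k‖ + C, ?_⟩ ⟨ν, hν, rfl⟩
    rintro x ⟨ρ, hρ, rfl⟩
    have h1 := normbd ρ hρ k
    have h2 := hC ρ hρ
    have h3 := le_abs_self (ρ k); have h4 := le_abs_self (h ρ)
    simp only []
    linarith
  have hPub : ∀ (k : C(Ω, ℝ)) (b : ℝ), (∀ ν ∈ M, ν k + h ν ≤ b) → P k ≤ b := by
    intro k b hb
    rw [hP k]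
    exact csSup_le (hne.image _) (by rintro x ⟨ρ, hρ, rfl⟩; exact hb ρ hρ)
  have hLip : ∀ a b : C(Ω, ℝ), P a ≤ P b + ‖a - b‖ := by
    intro a b
    refine hPub a _ fun ν hν => ?_
    have h1 := hPle b ν hν
    have h2 := normbd ν hν (a - b)
    have h3 : ν (a - b) = ν a - ν b := map_sub ν a b
    have h4 := le_abs_self (ν (a - b))
    linarith
  -- fix μ ∈ M and a neighborhood U of μ
  intro μ hμ
  rw [mem_closure_iff_nhds]
  intro U hU
  -- reduce the neighborhood to finitely many test functions
  have hind : 𝓝 μ = Filter.comap (fun (x : WeakDual ℝ C(Ω, ℝ)) (y : C(Ω, ℝ)) => x y)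
      (𝓝 (fun y => μ y)) := nhds_induced _ _
  rw [hind] at hU
  obtain ⟨T, hT, hTU⟩ := Filter.mem_comap.mp hU
  rw [nhds_pi] at hT
  obtain ⟨I, hIfin, t, ht, hsub⟩ := Filter.mem_pi.mp hT
  have ht' : ∀ k, ∃ e : ℝ, 0 < e ∧ Metric.ball (μ k) e ⊆ t k := fun k => by
    obtain ⟨e, he, hb⟩ := Metric.mem_nhds_iff.mp (ht k)
    exact ⟨e, he, hb⟩
  choose εk hεk hball using ht'
  set J : Finset C(Ω, ℝ) := hIfin.toFinset ∪ {0} with hJ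
  have hJne : J.Nonempty := ⟨0, by simp [hJ]⟩
  have hJU : ∀ ν : WeakDual ℝ C(Ω, ℝ), (∀ k ∈ J, |ν k - μ k| < εk k) → ν ∈ U := by
    intro ν hν
    refine hTU (hsub fun k hk => hball k ?_)
    rw [Metric.mem_ball, Real.dist_eq]
    exact hν k (by simp [hJ, hIfin.mem_toFinset, hk])
  -- the tolerance
  set εmin : ℝ := J.inf' hJne εk with hεmin
  have hεminpos : 0 < εmin := by
    rw [hεmin, Finset.lt_inf'_iff]
    exact fun k _ => hεk k
  set ε' : ℝ := εmin / 4 with hε'def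
  have hε' : 0 < ε' := by rw [hε'def]; linarith
  -- approximate the test functions by elements of V
  have happrox : ∀ k : C(Ω, ℝ), ∃ ga : C(Ω, ℝ), ga ∈ V ∧ ‖k - ga‖ < ε' := fun k => by
    obtain ⟨ga, hballk, hmem⟩ := Metric.dense_iff.mp hV k ε' hε'
    exact ⟨ga, hmem, by rwa [← dist_eq_norm, dist_comm]⟩
  choose g hgV hgapp using happrox
  -- the finite-dimensional minimization
  have main : ∃ gt ∈ V, ∃ ν₀ : WeakDual ℝ C(Ω, ℝ),
      (ν₀ ∈ M ∧ ν₀ (f + gt) + h ν₀ = P (f + gt) ∧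
        ∀ ν' ∈ M, ν' (f + gt) + h ν' = P (f + gt) → ν' = ν₀) ∧
      ∀ k ∈ J, |ν₀ (g k) - μ (g k)| ≤ ε' := by
    set gm : ({x // x ∈ J} → ℝ) → C(Ω, ℝ) :=
      fun s => ∑ i : {x // x ∈ J}, s i • g (i : C(Ω, ℝ)) with hgm
    have hgmV : ∀ s, gm s ∈ V := fun s => Submodule.sum_mem V fun i _ => V.smul_mem _ (hgV _)
    have hgm_single : ∀ (s : {x // x ∈ J} → ℝ) (j : {x // x ∈ J}) (c : ℝ),
        gm (s + Pi.single j c) = gm s + c • g (j : C(Ω, ℝ)) := by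
      intro s j c
      have h2 : ∑ i : {x // x ∈ J}, (Pi.single j c : {x // x ∈ J} → ℝ) i • g (i : C(Ω, ℝ))
          = c • g (j : C(Ω, ℝ)) := by
        rw [Finset.sum_eq_single_of_mem j (Finset.mem_univ j)
          (fun i _ hij => by rw [Pi.single_eq_of_ne hij, zero_smul])]
        rw [Pi.single_eq_same]
      calc gm (s + Pi.single j c)
          = ∑ i : {x // x ∈ J}, (s i • g (i : C(Ω, ℝ))
              + (Pi.single j c : {x // x ∈ J} → ℝ) i • g (i : C(Ω, ℝ))) := by
            refine Finset.sum_congr rfl fun i _ => ?_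
            rw [Pi.add_apply, add_smul]
        _ = (∑ i : {x // x ∈ J}, s i • g (i : C(Ω, ℝ)))
              + ∑ i : {x // x ∈ J}, (Pi.single j c : {x // x ∈ J} → ℝ) i • g (i : C(Ω, ℝ)) :=
            Finset.sum_add_distrib
        _ = gm s + c • g (j : C(Ω, ℝ)) := by rw [h2]
    set F : ({x // x ∈ J} → ℝ) → ℝ := fun s => P (f + gm s) - μ (gm s) with hF
    set B : ℝ := μ f + h μ with hB
    have hFlb : ∀ s, B ≤ F s := by
      intro s
      have := hPle (f + gm s) μ hμ
      rw [map_add] at this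
      simp only [hF, hB]
      linarith
    have hPcont : Continuous P := by
      refine (LipschitzWith.of_dist_le_mul (K := 1) fun a b => ?_).continuous
      rw [NNReal.coe_one, one_mul, Real.dist_eq, dist_eq_norm, abs_sub_le_iff]
      constructor
      · have := hLip a b; linarith
      · have h1 := hLip b a
        have h2 : ‖b - a‖ = ‖a - b‖ := by rw [← norm_neg]; congr 1; abel
        linarith
    have hgmcont : Continuous gm :=
      continuous_finset_sum _ fun i _ => (continuous_apply i).smul continuous_const
    have hFcont : Continuous F :=
      (hPcont.comp (continuous_const.add hgmcont)).sub (μ.continuous.comp hgmcont)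
    set G : ({x // x ∈ J} → ℝ) → ℝ := fun s => F s + ε' * ‖s‖ with hG
    have hGcont : Continuous G := hFcont.add (continuous_const.mul continuous_norm)
    set R : ℝ := (F 0 - B) / ε' + 1 with hR
    have hRpos : 0 < R := by
      have : 0 ≤ (F 0 - B) / ε' := div_nonneg (by linarith [hFlb 0]) hε'.le
      rw [hR]; linarith
    obtain ⟨t₀, ht₀, hmin⟩ := (isCompact_closedBall (0 : {x // x ∈ J} → ℝ) R).exists_isMinOn
      (Metric.nonempty_closedBall.2 hRpos.le) hGcont.continuousOn
    have hglobal : ∀ s : {x // x ∈ J} → ℝ, G t₀ ≤ G s := by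
      intro s
      by_cases hs : ‖s‖ ≤ R
      · exact isMinOn_iff.mp hmin s (mem_closedBall_zero_iff.2 hs)
      · push_neg at hs
        have h0 : G t₀ ≤ G 0 := isMinOn_iff.mp hmin 0 (mem_closedBall_zero_iff.2 (by
          rw [norm_zero]; exact hRpos.le))
        have hG0 : G 0 = F 0 := by simp [hG]
        have h1 : B + ε' * ‖s‖ ≤ G s := by
          have := hFlb s
          simp only [hG]; linarith
        have h2 : ε' * R < ε' * ‖s‖ := mul_lt_mul_of_pos_left hs hε'
        have h3 : ε' * R = (F 0 - B) + ε' := by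
          rw [hR, mul_add, mul_one, mul_div_cancel₀ _ hε'.ne']
        linarith
    obtain ⟨ν₀, ⟨hν₀M, hν₀eq⟩, hν₀uniq⟩ := huniq (gm t₀) (hgmV t₀)
    set k₀ : C(Ω, ℝ) := f + gm t₀ with hk₀
    have core : ∀ (j : {x // x ∈ J}) (σ : ℝ), |σ| = 1 →
        -ε' ≤ σ * (ν₀ (g ↑j) - μ (g ↑j)) := by
      intro j σ hσ
      set r : ℕ → ℝ := fun m => 1 / (m + 1) with hr
      have hrpos : ∀ m, 0 < r m := fun m => by rw [hr]; positivity
      set s : ℕ → ({x // x ∈ J} → ℝ) := fun m => t₀ + Pi.single j (r m * σ) with hs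
      have hsgm : ∀ m, f + gm (s m) = k₀ + (r m * σ) • g ↑j := by
        intro m
        rw [hs]
        simp only [hgm_single t₀ j (r m * σ), hk₀]
        rw [add_assoc]
      have hex : ∀ m : ℕ, ∃ ν : WeakDual ℝ C(Ω, ℝ), ν ∈ M ∧
          ν (f + gm (s m)) + h ν = P (f + gm (s m)) :=
        fun m => (huniq (gm (s m)) (hgmV (s m))).exists
      choose νs hνsM hνseq using hex
      have hslope : ∀ m, -ε' ≤ σ * (νs m (g ↑j) - μ (g ↑j)) := by
        intro m
        have hGle : G t₀ ≤ G (s m) := hglobal (s m)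
        have hnorm : ‖s m‖ ≤ ‖t₀‖ + r m := by
          have h1 : ‖(Pi.single j (r m * σ) : {x // x ∈ J} → ℝ)‖ ≤ r m := by
            rw [pi_norm_le_iff_of_nonneg (hrpos m).le]
            intro i
            rcases eq_or_ne i j with rfl | hij
            · rw [Pi.single_eq_same, Real.norm_eq_abs, abs_mul, hσ, mul_one,
                abs_of_pos (hrpos m)]
            · simp [Pi.single_eq_of_ne hij, (hrpos m).le]
          calc ‖s m‖ ≤ ‖t₀‖ + ‖(Pi.single j (r m * σ) : {x // x ∈ J} → ℝ)‖ := norm_add_le _ _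
            _ ≤ ‖t₀‖ + r m := by linarith
        have hlow : -(ε' * r m) ≤ F (s m) - F t₀ := by
          have h1 : F t₀ + ε' * ‖t₀‖ ≤ F (s m) + ε' * ‖s m‖ := hGle
          have h2 : ε' * ‖s m‖ ≤ ε' * ‖t₀‖ + ε' * r m := by
            rw [← mul_add]; exact mul_le_mul_of_nonneg_left hnorm hε'.le
          linarith
        have hup : F (s m) - F t₀ ≤ (r m * σ) * (νs m (g ↑j) - μ (g ↑j)) := by
          have e1 : F (s m) = νs m (f + gm (s m)) + h (νs m) - μ (gm (s m)) := by
            simp only [hF]; rw [← hνseq m]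
          have e2 : νs m k₀ + h (νs m) - μ (gm t₀) ≤ F t₀ := by
            have h3 := hPle k₀ (νs m) (hνsM m)
            simp only [hF]
            rw [← hk₀]
            linarith
          have e3 : νs m (f + gm (s m)) = νs m k₀ + (r m * σ) * νs m (g ↑j) := by
            rw [hsgm m, map_add, map_smul, smul_eq_mul]
          have e4 : μ (gm (s m)) = μ (gm t₀) + (r m * σ) * μ (g ↑j) := by
            have h4 : gm (s m) = gm t₀ + (r m * σ) • g ↑j := hgm_single t₀ j (r m * σ)
            rw [h4, map_add, map_smul, smul_eq_mul]
          rw [e1, e3, e4, mul_sub]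
          linarith
        have h5 : r m * (-ε') ≤ r m * (σ * (νs m (g ↑j) - μ (g ↑j))) := by
          have h6 : r m * (σ * (νs m (g ↑j) - μ (g ↑j)))
              = (r m * σ) * (νs m (g ↑j) - μ (g ↑j)) := (mul_assoc _ _ _).symm
          rw [h6]
          linarith
        exact le_of_mul_le_mul_left h5 (hrpos m)
      obtain ⟨ν', hν'M, hcl⟩ := hcomp.exists_mapClusterPt (f := atTop) (u := νs)
        (le_principal_iff.2 (mem_map.2 (Eventually.of_forall hνsM)))
      have hν'eq : ν' k₀ + h ν' = P k₀ := by
        refine le_antisymm (hPle k₀ ν' hν'M) ?_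
        by_contra hlt
        push_neg at hlt
        set δ : ℝ := P k₀ - (ν' k₀ + h ν') with hδ
        have hδpos : 0 < δ := by rw [hδ]; linarith
        have husc' := husc ν' hν'M (h ν' + δ / 3) (by linarith)
        rw [eventually_nhdsWithin_iff] at husc'
        have hev : ∀ᶠ ν : WeakDual ℝ C(Ω, ℝ) in 𝓝 ν', ν k₀ < ν' k₀ + δ / 3 :=
          ((WeakDual.eval_continuous k₀).continuousAt (x := ν')).eventually_lt_const
            (by linarith)
        have hfreq : ∃ᶠ m in atTop, (νs m ∈ M → h (νs m) < h ν' + δ / 3) ∧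
            νs m k₀ < ν' k₀ + δ / 3 :=
          mapClusterPt_iff_frequently.mp hcl _ (husc'.and hev)
        have hrtend : Tendsto r atTop (𝓝 0) := by
          rw [hr]; exact tendsto_one_div_add_atTop_nhds_zero_nat
        have hev2 : ∀ᶠ m in atTop, 2 * r m * ‖g (↑j : C(Ω, ℝ))‖ < δ / 3 := by
          have h7 := (hrtend.const_mul 2).mul_const ‖g (↑j : C(Ω, ℝ))‖
          rw [mul_zero, zero_mul] at h7
          exact h7.eventually_lt_const (by linarith)
        obtain ⟨m, ⟨h1, h2⟩, h3⟩ := (hfreq.and_eventually hev2).exists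
        have hh := h1 (hνsM m)
        have c1 : P k₀ ≤ P (f + gm (s m)) + r m * ‖g (↑j : C(Ω, ℝ))‖ := by
          have c0 := hLip k₀ (f + gm (s m))
          have hnorm2 : ‖k₀ - (f + gm (s m))‖ = r m * ‖g (↑j : C(Ω, ℝ))‖ := by
            rw [hsgm m]
            have h8 : k₀ - (k₀ + (r m * σ) • g ↑j) = -((r m * σ) • g (↑j : C(Ω, ℝ))) := by abel
            rw [h8, norm_neg]
            have h9 := norm_smul (α := ℝ) (β := C(Ω, ℝ)) (r m * σ) (g ↑j)
            rw [Real.norm_eq_abs, abs_mul, hσ, mul_one, abs_of_pos (hrpos m)] at h9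
            exact h9
          rw [hnorm2] at c0
          linarith
        have c2 : νs m (f + gm (s m)) ≤ νs m k₀ + r m * ‖g (↑j : C(Ω, ℝ))‖ := by
          have e3 : νs m (f + gm (s m)) = νs m k₀ + (r m * σ) * νs m (g ↑j) := by
            rw [hsgm m, map_add, map_smul, smul_eq_mul]
          have hb := normbd (νs m) (hνsM m) (g ↑j)
          have h9 : (r m * σ) * νs m (g ↑j) ≤ r m * ‖g (↑j : C(Ω, ℝ))‖ := by
            have h4 : |(r m * σ) * νs m (g ↑j)| ≤ r m * ‖g (↑j : C(Ω, ℝ))‖ := by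
              rw [abs_mul, abs_mul, hσ, mul_one, abs_of_pos (hrpos m)]
              exact mul_le_mul_of_nonneg_left hb (hrpos m).le
            linarith [le_abs_self ((r m * σ) * νs m (g ↑j))]
          linarith [e3]
        have c3 : P (f + gm (s m)) = νs m (f + gm (s m)) + h (νs m) := (hνseq m).symm
        have hcontr : P k₀ < P k₀ := by
          calc P k₀ ≤ νs m (f + gm (s m)) + h (νs m) + r m * ‖g (↑j : C(Ω, ℝ))‖ := by
                rw [← c3]; exact c1
            _ ≤ νs m k₀ + h (νs m) + 2 * r m * ‖g (↑j : C(Ω, ℝ))‖ := by linarith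
            _ < (ν' k₀ + δ / 3) + (h ν' + δ / 3) + δ / 3 := by linarith
            _ = P k₀ := by rw [hδ]; ring
        exact absurd hcontr (lt_irrefl _)
      have hν'ν₀ : ν' = ν₀ := hν₀uniq ν' ⟨hν'M, hν'eq⟩
      refine le_of_forall_pos_le_add fun η hη => ?_
      have hW : {ν : WeakDual ℝ C(Ω, ℝ) | |ν (g ↑j) - ν₀ (g ↑j)| < η} ∈ 𝓝 ν' := by
        rw [hν'ν₀]
        have hopen : IsOpen {ν : WeakDual ℝ C(Ω, ℝ) | |ν (g ↑j) - ν₀ (g ↑j)| < η} := by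
          have hc : Continuous fun ν : WeakDual ℝ C(Ω, ℝ) => |ν (g ↑j) - ν₀ (g ↑j)| :=
            ((WeakDual.eval_continuous (g ↑j)).sub continuous_const).abs
          exact isOpen_lt hc continuous_const
        exact hopen.mem_nhds (by simp [hη])
      obtain ⟨m, hm⟩ := (mapClusterPt_iff_frequently.mp hcl _ hW).exists
      have hsl := hslope m
      have hfin : σ * (νs m (g ↑j) - μ (g ↑j)) - η ≤ σ * (ν₀ (g ↑j) - μ (g ↑j)) := by
        have h10 : |σ * (νs m (g ↑j) - ν₀ (g ↑j))| ≤ η := by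
          rw [abs_mul, hσ, one_mul]
          exact le_of_lt hm
        have h11 : σ * (νs m (g ↑j) - μ (g ↑j)) - σ * (ν₀ (g ↑j) - μ (g ↑j))
            = σ * (νs m (g ↑j) - ν₀ (g ↑j)) := by ring
        have h12 := le_abs_self (σ * (νs m (g ↑j) - ν₀ (g ↑j)))
        linarith
      linarith
    refine ⟨gm t₀, hgmV t₀, ν₀, ⟨hν₀M, hν₀eq, fun ν' hν' heq => hν₀uniq ν' ⟨hν', heq⟩⟩, ?_⟩
    intro k hk
    have h1 := core ⟨k, hk⟩ 1 (by norm_num)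
    have h2 := core ⟨k, hk⟩ (-1) (by norm_num)
    rw [one_mul] at h1
    rw [neg_one_mul] at h2
    exact abs_le.2 ⟨by linarith, by linarith⟩
  obtain ⟨gt, hgtV, ν₀, ⟨hν₀M, hν₀eq, hν₀uniq⟩, hclose⟩ := main
  refine ⟨ν₀, hJU ν₀ fun k hk => ?_, gt, hgtV, hν₀M, hν₀eq, hν₀uniq⟩
  -- ν₀ is close to μ on each test function
  have b1 : |ν₀ k - ν₀ (g k)| ≤ ‖k - g k‖ := by
    have := normbd ν₀ hν₀M (k - g k)
    rwa [map_sub] at this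
  have b2 : |μ (g k) - μ k| ≤ ‖k - g k‖ := by
    have := normbd μ hμ (g k - k)
    rw [map_sub] at this
    have hn : ‖g k - k‖ = ‖k - g k‖ := by rw [← norm_neg]; congr 1; abel
    rwa [hn] at this
  have b3 := hclose k hk
  have b4 := hgapp k
  have b5 : εmin ≤ εk k := by
    rw [hεmin]
    exact Finset.inf'_le εk hk
  have b6 : |ν₀ k - μ k| ≤ |ν₀ k - ν₀ (g k)| + |ν₀ (g k) - μ (g k)| + |μ (g k) - μ k| := by
    have := abs_sub_le (ν₀ k) (ν₀ (g k)) (μ k)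
    have := abs_sub_le (ν₀ (g k)) (μ (g k)) (μ k)
    linarith [abs_sub_le (ν₀ k) (ν₀ (g k)) (μ k), abs_sub_le (ν₀ (g k)) (μ (g k)) (μ k)]
  have : |ν₀ k - μ k| ≤ 3 * ε' := by linarith
  rw [hε'def] at this
  linarith
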